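/- There exists an absolute constant C such that the following holds. Let z ∈ ℝ^d with ‖z‖₂ ≤ 1 and let α ≥ 4‖z‖_∞. Suppose x ∈ ℝ^d satisfies ‖x‖₂² ≥ 1/8. Then for every γ ≥ 0: ‖⟨z,x⟩z − ‖x‖₂²·x‖₂ ≤ ‖⟨z,x⟩z − ‖x‖₂²·x − γ∇R(x)‖₂. In particular, if ‖⟨z,x⟩z − ‖x‖₂²·x − γ∇R(x)‖₂ ≤ ε for some γ ≥ 0, then ‖⟨z,x⟩z − ‖x‖₂²·x‖₂ ≤ C·ε. -/

import Mathlib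

open Matrix Finset

noncomputable section

/-- Euclidean norm of a finite real vector. -/
def vnorm {n : ℕ} (x : Fin n → ℝ) : ℝ := Real.sqrt (∑ i, (x i) ^ 2)

/-- Gradient of the regularizer `R(x) = ∑ᵢ (|xᵢ| − α)⁴ 1_{|xᵢ| ≥ α}`. -/
def gradR {d : ℕ} (α : ℝ) (x : Fin d → ℝ) : Fin d → ℝ :=
  fun i => if α ≤ |x i| then 4 * (|x i| - α) ^ 3 * Real.sign (x i) else 0

theorem stmt10 :
    ∃ C : ℝ, 0 < C ∧
      ∀ (d : ℕ) (α : ℝ) (z x : Fin d → ℝ),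
        0 < α → vnorm z ≤ 1 → (∀ i, 4 * |z i| ≤ α) →
        vnorm x ^ 2 ≥ 1 / 8 →
        (∀ γ : ℝ, 0 ≤ γ →
          vnorm ((z ⬝ᵥ x) • z - vnorm x ^ 2 • x) ≤
            vnorm ((z ⬝ᵥ x) • z - vnorm x ^ 2 • x - γ • gradR α x)) ∧
        (∀ γ ε : ℝ, 0 ≤ γ →
          vnorm ((z ⬝ᵥ x) • z - vnorm x ^ 2 • x - γ • gradR α x) ≤ ε →
          vnorm ((z ⬝ᵥ x) • z - vnorm x ^ 2 • x) ≤ C * ε) := by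
  refine ⟨1, one_pos, ?_⟩
  intro d α z x hα hz hzi hx
  set S : ℝ := z ⬝ᵥ x with hS
  set N : ℝ := vnorm x with hN
  have hxn : (0:ℝ) ≤ N := Real.sqrt_nonneg _
  have hx4 : (1:ℝ)/4 ≤ N := by nlinarith
  -- Cauchy-Schwarz
  have hNsq : N ^ 2 = ∑ i, (x i) ^ 2 := by
    rw [hN, vnorm]
    exact Real.sq_sqrt (Finset.sum_nonneg fun i _ => sq_nonneg _)
  have hzsq : vnorm z ^ 2 = ∑ i, (z i) ^ 2 := by
    rw [vnorm]
    exact Real.sq_sqrt (Finset.sum_nonneg fun i _ => sq_nonneg _)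
  have hcs : S ^ 2 ≤ N ^ 2 := by
    have h2 : S ^ 2 ≤ (∑ i, (z i)^2) * (∑ i, (x i)^2) := by
      have := Finset.sum_mul_sq_le_sq_mul_sq Finset.univ z x
      simpa [hS, dotProduct] using this
    rw [← hzsq, ← hNsq] at h2
    have hzn : (0:ℝ) ≤ vnorm z := Real.sqrt_nonneg _
    have hz2 : vnorm z ^ 2 ≤ 1 := by nlinarith
    nlinarith [mul_le_mul_of_nonneg_right hz2 (sq_nonneg N)]
  have hSabs : |S| ≤ N := by
    rw [← Real.sqrt_sq_eq_abs]
    calc Real.sqrt (S^2) ≤ Real.sqrt (N^2) := Real.sqrt_le_sqrt hcs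
    _ = N := Real.sqrt_sq hxn
  -- coordinate lemma
  have key : ∀ i, (S * z i - N ^ 2 * x i) * gradR α x i ≤ 0 := by
    intro i
    unfold gradR
    by_cases hcase : α ≤ |x i|
    · simp only [hcase, if_true]
      have hzi' : |z i| ≤ α / 4 := by linarith [hzi i]
      have hxi : α ≤ |x i| := hcase
      have hc : (0:ℝ) ≤ 4 * (|x i| - α)^3 := by
        have : (0:ℝ) ≤ (|x i| - α) := by linarith
        positivity
      have hSz : |S * z i| ≤ N * (|x i| / 4) := by
        rw [abs_mul]
        have h1 : |S| * |z i| ≤ N * (α/4) := by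
          apply mul_le_mul hSabs hzi' (abs_nonneg _) hxn
        have : N * (α/4) ≤ N * (|x i|/4) := by
          apply mul_le_mul_of_nonneg_left _ hxn
          linarith
        linarith
      have hmain : S * z i * Real.sign (x i) ≤ N ^ 2 * |x i| := by
        have hsg : |Real.sign (x i)| ≤ 1 := by
          rcases Real.sign_apply_eq (x i) with h | h | h <;> rw [h] <;> norm_num
        have h1 : |S * z i * Real.sign (x i)| ≤ N * (|x i|/4) := by
          rw [abs_mul]
          nlinarith [abs_nonneg (S * z i), abs_nonneg (Real.sign (x i))]
        have h2 : N * (|x i|/4) ≤ N^2 * |x i| := by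
          nlinarith [mul_nonneg (mul_nonneg hxn (abs_nonneg (x i))) (by linarith : (0:ℝ) ≤ N - 1/4)]
        calc S * z i * Real.sign (x i) ≤ |S * z i * Real.sign (x i)| := le_abs_self _
          _ ≤ N^2 * |x i| := le_trans h1 h2
      have hsx : Real.sign (x i) * x i = |x i| := by
        have hne : x i ≠ 0 := by
          intro h0; rw [h0] at hxi; simp at hxi; linarith
        rcases hne.lt_or_gt with h | h
        · rw [Real.sign_of_neg h, abs_of_neg h]; ring
        · rw [Real.sign_of_pos h, abs_of_pos h]; ring
      have expand : (S * z i - N ^ 2 * x i) * (4 * (|x i| - α) ^ 3 * Real.sign (x i))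
          = (4 * (|x i| - α)^3) * (S * z i * Real.sign (x i) - N^2 * (Real.sign (x i) * x i)) := by
        ring
      rw [expand, hsx]
      apply mul_nonpos_of_nonneg_of_nonpos hc
      linarith
    · simp [hcase]
  -- main inequality, for each γ ≥ 0
  have main : ∀ γ : ℝ, 0 ≤ γ →
      vnorm (S • z - N ^ 2 • x) ≤ vnorm (S • z - N ^ 2 • x - γ • gradR α x) := by
    intro γ hγ
    set v : Fin d → ℝ := fun i => S * z i - N^2 * x i with hv
    set g : Fin d → ℝ := gradR α x with hg
    have happ1 : ∀ i, (S • z - N ^ 2 • x) i = v i := by intro i; simp [hv]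
    have happ2 : ∀ i, (S • z - N ^ 2 • x - γ • gradR α x) i = v i - γ * g i := by
      intro i; simp [hv, hg]
    have hsum : ∑ i, (v i)^2 ≤ ∑ i, (v i - γ * g i)^2 := by
      have hdiff : ∑ i, ((v i - γ * g i)^2 - (v i)^2)
          = γ^2 * (∑ i, (g i)^2) - 2*γ * (∑ i, v i * g i) := by
        rw [Finset.mul_sum, Finset.mul_sum, ← Finset.sum_sub_distrib]
        exact Finset.sum_congr rfl fun i _ => by ring
      have hvg : ∑ i, v i * g i ≤ 0 :=
        Finset.sum_nonpos fun i _ => key i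
      have hg2 : (0:ℝ) ≤ ∑ i, (g i)^2 := Finset.sum_nonneg fun i _ => sq_nonneg _
      have hsub : ∑ i, ((v i - γ * g i)^2 - (v i)^2)
          = (∑ i, (v i - γ * g i)^2) - ∑ i, (v i)^2 := Finset.sum_sub_distrib _ _
      nlinarith [mul_nonneg (mul_nonneg hγ hγ) hg2, mul_nonpos_of_nonneg_of_nonpos hγ hvg]
    unfold vnorm
    apply Real.sqrt_le_sqrt
    simp only [happ1, happ2]
    exact hsum
  exact ⟨main, fun γ ε hγ hε => by
    have := main γ hγ
    simpa using le_trans this hε⟩
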